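/- Let Δ be a PR complex over a field K, and let σ_1, σ_2 be faces of Δ with H̃_{i_1}(link_Δ σ_1; K) ≠ 0 and H̃_{i_2}(link_Δ σ_2; K) ≠ 0. If |σ_1| < |σ_2| then i_1 > i_2. -/

import Mathlib

open Finset

namespace SRPure

variable {V : Type*}

/-- A downward closed set of finite sets: the faces of an abstract simplicial complex. -/
def IsDown (Δ : Set (Finset V)) : Prop := ∀ s ∈ Δ, ∀ t ⊆ s, t ∈ Δ

/-- A facet is a maximal face. -/
def IsFacet (Δ : Set (Finset V)) (F : Finset V) : Prop :=
  F ∈ Δ ∧ ∀ G ∈ Δ, F ⊆ G → F = G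

section Link

variable [DecidableEq V]

/-- The link of a face `σ`. -/
def link (Δ : Set (Finset V)) (σ : Finset V) : Set (Finset V) :=
  {τ | Disjoint τ σ ∧ τ ∪ σ ∈ Δ}

theorem link_down {Δ : Set (Finset V)} (hΔ : IsDown Δ) (σ : Finset V) :
    IsDown (link Δ σ) := by
  rintro s ⟨hd, hu⟩ t hts
  exact ⟨hd.mono_left hts, hΔ _ hu _ (Finset.union_subset_union hts (Finset.Subset.refl σ))⟩

end Link

section Homology

variable (K : Type*) [Field K] [LinearOrder V]

/-- Simplicial chains spanned by the faces of cardinality `c`. -/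
abbrev Chains (Δ : Set (Finset V)) (c : ℕ) : Type _ :=
  {s : Finset V // s ∈ Δ ∧ s.card = c} →₀ K

/-- The boundary of a single face of cardinality `c+1`. -/
noncomputable def faceBdry {Δ : Set (Finset V)} (hΔ : IsDown Δ) (c : ℕ)
    (s : {s : Finset V // s ∈ Δ ∧ s.card = c + 1}) : Chains K Δ c :=
  ∑ v ∈ s.1.attach,
    ((-1 : K) ^ ((s.1.filter (fun w => w < v.1)).card)) •
      Finsupp.single
        ⟨s.1.erase v.1, hΔ _ s.2.1 _ (Finset.erase_subset _ _),
          by simp [Finset.card_erase_of_mem v.2, s.2.2]⟩ (1 : K)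

/-- The simplicial boundary map. -/
noncomputable def bdry {Δ : Set (Finset V)} (hΔ : IsDown Δ) (c : ℕ) :
    Chains K Δ (c + 1) →ₗ[K] Chains K Δ c :=
  Finsupp.lsum K fun s => LinearMap.toSpanSingleton K _ (faceBdry K hΔ c s)

/-- Reduced cycles in cardinality `c` (homological degree `c - 1`). -/
noncomputable def cycles {Δ : Set (Finset V)} (hΔ : IsDown Δ) :
    (c : ℕ) → Submodule K (Chains K Δ c)
  | 0 => ⊤
  | c + 1 => LinearMap.ker (bdry K hΔ c)

/-- `RH K hΔ c` is the reduced simplicial homology (with coefficients in `K`) of the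
complex in homological degree `c - 1`, indexed by the cardinality `c` of faces; so
`RH K hΔ 0` is `H̃₋₁` and `RH K hΔ (i+1)` is `H̃ᵢ`. -/
noncomputable abbrev RH {Δ : Set (Finset V)} (hΔ : IsDown Δ) (c : ℕ) :=
  @HasQuotient.Quotient (cycles K hΔ c) (Submodule K (cycles K hΔ c))
    (Submodule.hasQuotient (R := K) (M := cycles K hΔ c))
    (Submodule.comap (cycles K hΔ c).subtype (LinearMap.range (bdry K hΔ c)))

/-- A complex is PR (has a "pure resolution") over `K` if links of faces of different
sizes never have nontrivial reduced homology in the same degree. -/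
def IsPR {Δ : Set (Finset V)} (hΔ : IsDown Δ) : Prop :=
  ∀ σ ∈ Δ, ∀ τ ∈ Δ, ∀ c : ℕ,
    Nontrivial (RH K (link_down hΔ σ) c) →
    Nontrivial (RH K (link_down hΔ τ) c) → σ.card = τ.card

end Homology

end SRPure


set_option linter.unusedSectionVars false
set_option linter.unusedVariables false

namespace SRPure

section Aux

variable {V : Type*} [LinearOrder V]

/-- Deletion of a vertex. -/
def del (Δ : Set (Finset V)) (u : V) : Set (Finset V) := {s | s ∈ Δ ∧ u ∉ s}

theorem del_down {Δ : Set (Finset V)} (hΔ : IsDown Δ) (u : V) : IsDown (del Δ u) :=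
  fun s hs t hts => ⟨hΔ _ hs.1 _ hts, fun hu => hs.2 (hts hu)⟩

theorem del_sub (Δ : Set (Finset V)) (u : V) : del Δ u ⊆ Δ := fun _ hs => hs.1

/-- Induced subcomplex on a vertex set `W`. -/
def ires (Δ : Set (Finset V)) (W : Finset V) : Set (Finset V) := {s | s ∈ Δ ∧ s ⊆ W}

theorem ires_down {Δ : Set (Finset V)} (hΔ : IsDown Δ) (W : Finset V) :
    IsDown (ires Δ W) := fun s hs t hts => ⟨hΔ _ hs.1 _ hts, hts.trans hs.2⟩

theorem mem_link_singleton {Δ : Set (Finset V)} {u : V} {τ : Finset V} :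
    τ ∈ link Δ ({u} : Finset V) ↔ u ∉ τ ∧ insert u τ ∈ Δ := by
  simp only [link, Set.mem_setOf_eq, Finset.disjoint_singleton_right]
  constructor
  · rintro ⟨h1, h2⟩
    refine ⟨h1, ?_⟩
    rwa [Finset.union_comm, ← Finset.insert_eq] at h2
  · rintro ⟨h1, h2⟩
    refine ⟨h1, ?_⟩
    rwa [Finset.union_comm, ← Finset.insert_eq]

theorem link_singleton_sub {Δ : Set (Finset V)} (hΔ : IsDown Δ) (u : V) :
    link Δ ({u} : Finset V) ⊆ Δ := by
  intro τ hτ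
  rw [mem_link_singleton] at hτ
  exact hΔ _ hτ.2 _ (Finset.subset_insert _ _)

theorem not_mem_of_mem_link {Δ : Set (Finset V)} {u : V} {τ : Finset V}
    (h : τ ∈ link Δ ({u} : Finset V)) : u ∉ τ := (mem_link_singleton.1 h).1

variable (K : Type*) [Field K]

/-- The sign of a vertex relative to a face. -/
def sgn (t : Finset V) (v : V) : K := (-1 : K) ^ ((t.filter (fun w => w < v)).card)

theorem sgn_mul_self (t : Finset V) (v : V) : sgn K t v * sgn K t v = 1 := by
  rw [sgn, ← mul_pow]; norm_num

theorem sgn_insert {t : Finset V} {v : V} (u : V) (hv : v ∉ t) :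
    sgn K (insert v t) u = (if v < u then -1 else 1) * sgn K t u := by
  rw [sgn, sgn, Finset.filter_insert]
  by_cases h : v < u
  · rw [if_pos h, if_pos h, Finset.card_insert_of_notMem (fun hc => hv (Finset.mem_filter.1 hc).1)]
    rw [pow_succ]
    ring
  · rw [if_neg h, if_neg h, one_mul]

theorem sgn_erase {t : Finset V} {v : V} (u : V) (hv : v ∈ t) :
    sgn K (t.erase v) u = (if v < u then -1 else 1) * sgn K t u := by
  have h := sgn_insert K (t := t.erase v) (v := v) u (Finset.notMem_erase _ _)
  rw [Finset.insert_erase hv] at h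
  by_cases hc : v < u
  · rw [if_pos hc] at h ⊢; rw [h]; ring
  · rw [if_neg hc] at h ⊢; rw [h]; ring

theorem sgn_swap {t : Finset V} {u v : V} (hu : u ∈ t) (hv : v ∈ t) (huv : u ≠ v) :
    sgn K t v * sgn K (t.erase v) u = -(sgn K t u * sgn K (t.erase u) v) := by
  rw [sgn_erase K u hv, sgn_erase K v hu]
  rcases lt_or_gt_of_ne huv with h | h
  · rw [if_pos h, if_neg (not_lt.2 h.le)]; ring
  · rw [if_neg (not_lt.2 h.le), if_pos h]; ring

theorem sgn_erase_self {t : Finset V} {u : V} (hu : u ∈ t) :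
    sgn K (t.erase u) u = sgn K t u := by
  rw [sgn_erase K u hu, if_neg (lt_irrefl u), one_mul]

theorem sgn_insert_self {t : Finset V} {u : V} (hu : u ∉ t) :
    sgn K (insert u t) u = sgn K t u := by
  rw [sgn_insert K u hu, if_neg (lt_irrefl u), one_mul]

open Classical in
/-- The basis chain attached to a finset, or zero. -/
noncomputable def bS (Δ : Set (Finset V)) (c : ℕ) (t : Finset V) : Chains K Δ c :=
  if h : t ∈ Δ ∧ t.card = c then Finsupp.single ⟨t, h⟩ (1 : K) else 0

theorem bS_pos {Δ : Set (Finset V)} {c : ℕ} {t : Finset V} (h : t ∈ Δ) (hc : t.card = c) :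
    bS K Δ c t = Finsupp.single ⟨t, ⟨h, hc⟩⟩ (1 : K) := by
  rw [bS, dif_pos ⟨h, hc⟩]

theorem bS_ne_card {Δ : Set (Finset V)} {c : ℕ} {t : Finset V} (hc : t.card ≠ c) :
    bS K Δ c t = 0 := by
  rw [bS, dif_neg (fun h => hc h.2)]

theorem bS_not_mem {Δ : Set (Finset V)} {c : ℕ} {t : Finset V} (h : t ∉ Δ) :
    bS K Δ c t = 0 := by
  rw [bS, dif_neg (fun hh => h hh.1)]

theorem single_eq_smul_bS {Δ : Set (Finset V)} {c : ℕ}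
    (t : {s : Finset V // s ∈ Δ ∧ s.card = c}) (k : K) :
    (Finsupp.single t k : Chains K Δ c) = k • bS K Δ c t.1 := by
  rw [bS_pos K t.2.1 t.2.2, Finsupp.smul_single, smul_eq_mul, mul_one]

theorem faceBdry_eq {Δ : Set (Finset V)} (hΔ : IsDown Δ) (c : ℕ)
    (s : {s : Finset V // s ∈ Δ ∧ s.card = c + 1}) :
    faceBdry K hΔ c s = ∑ v ∈ s.1, sgn K s.1 v • bS K Δ c (s.1.erase v) := by
  rw [faceBdry, ← Finset.sum_attach s.1 (fun v => sgn K s.1 v • bS K Δ c (s.1.erase v))]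
  refine Finset.sum_congr rfl fun v _ => ?_
  rw [bS_pos K (hΔ _ s.2.1 _ (Finset.erase_subset _ _))
    (by simp [Finset.card_erase_of_mem v.2, s.2.2])]
  rfl

theorem bdry_single {Δ : Set (Finset V)} (hΔ : IsDown Δ) (c : ℕ)
    (s : {s : Finset V // s ∈ Δ ∧ s.card = c + 1}) (k : K) :
    bdry K hΔ c (Finsupp.single s k) = k • ∑ v ∈ s.1, sgn K s.1 v • bS K Δ c (s.1.erase v) := by
  rw [bdry, Finsupp.lsum_single, LinearMap.toSpanSingleton_apply, faceBdry_eq]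

theorem bdry_bS {Δ : Set (Finset V)} (hΔ : IsDown Δ) {c : ℕ} {t : Finset V}
    (h : t ∈ Δ) (hc : t.card = c + 1) :
    bdry K hΔ c (bS K Δ (c + 1) t) = ∑ v ∈ t, sgn K t v • bS K Δ c (t.erase v) := by
  rw [bS_pos K h hc, bdry_single, one_smul]

end Aux

end SRPure

namespace SRPure

section Maps

set_option linter.unusedSectionVars false

variable {V : Type*} [LinearOrder V] (K : Type*) [Field K]

/-- Inclusion of chains of a subcomplex. -/
noncomputable def inclMap {Γ₁ Γ₂ : Set (Finset V)} (h : Γ₁ ⊆ Γ₂) (n : ℕ) :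
    Chains K Γ₁ n →ₗ[K] Chains K Γ₂ n :=
  Finsupp.lmapDomain K K fun s => ⟨s.1, h s.2.1, s.2.2⟩

theorem inclMap_single {Γ₁ Γ₂ : Set (Finset V)} (h : Γ₁ ⊆ Γ₂) (n : ℕ)
    (s : {s : Finset V // s ∈ Γ₁ ∧ s.card = n}) (k : K) :
    inclMap K h n (Finsupp.single s k) = Finsupp.single ⟨s.1, h s.2.1, s.2.2⟩ k :=
  Finsupp.mapDomain_single

theorem inclMap_injective {Γ₁ Γ₂ : Set (Finset V)} (h : Γ₁ ⊆ Γ₂) (n : ℕ) :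
    Function.Injective (inclMap K h n) :=
  Finsupp.mapDomain_injective (by
    intro a b hab
    have : (⟨a.1, h a.2.1, a.2.2⟩ : {s : Finset V // s ∈ Γ₂ ∧ s.card = n}).val =
        (⟨b.1, h b.2.1, b.2.2⟩ : {s : Finset V // s ∈ Γ₂ ∧ s.card = n}).val :=
      congrArg Subtype.val hab
    exact Subtype.ext this)

theorem inclMap_bS {Γ₁ Γ₂ : Set (Finset V)} (h : Γ₁ ⊆ Γ₂) (n : ℕ) {t : Finset V}
    (ht : t ∈ Γ₁) (hc : t.card = n) :
    inclMap K h n (bS K Γ₁ n t) = bS K Γ₂ n t := by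
  rw [bS_pos K ht hc, inclMap_single, bS_pos K (h ht) hc]

/-- Projection to the chains of the deletion. -/
noncomputable def piA {Γ : Set (Finset V)} (u : V) (n : ℕ) :
    Chains K Γ n →ₗ[K] Chains K (del Γ u) n :=
  Finsupp.lsum K fun s => LinearMap.toSpanSingleton K _ (bS K (del Γ u) n s.1)

theorem piA_single {Γ : Set (Finset V)} (u : V) (n : ℕ)
    (s : {s : Finset V // s ∈ Γ ∧ s.card = n}) (k : K) :
    piA K u n (Finsupp.single s k) = k • bS K (del Γ u) n s.1 := by
  rw [piA, Finsupp.lsum_single, LinearMap.toSpanSingleton_apply]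

theorem piA_bS {Γ : Set (Finset V)} (u : V) (n : ℕ) (t : Finset V) :
    piA K u n (bS K Γ n t) = bS K (del Γ u) n t := by
  by_cases h : t ∈ Γ ∧ t.card = n
  · rw [bS_pos K h.1 h.2, piA_single, one_smul]
  · rw [bS, dif_neg h, map_zero, bS, dif_neg (fun hc => h ⟨hc.1.1, hc.2⟩)]

/-- Projection to the chains of the link (the "u-component"). -/
noncomputable def piL {Γ : Set (Finset V)} (u : V) (n : ℕ) :
    Chains K Γ (n + 1) →ₗ[K] Chains K (link Γ ({u} : Finset V)) n :=
  Finsupp.lsum K fun s => LinearMap.toSpanSingleton K _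
    (if u ∈ s.1 then sgn K s.1 u • bS K (link Γ ({u} : Finset V)) n (s.1.erase u) else 0)

theorem piL_single {Γ : Set (Finset V)} (u : V) (n : ℕ)
    (s : {s : Finset V // s ∈ Γ ∧ s.card = n + 1}) (k : K) :
    piL K u n (Finsupp.single s k) =
      k • (if u ∈ s.1 then sgn K s.1 u • bS K (link Γ ({u} : Finset V)) n (s.1.erase u)
        else 0) := by
  rw [piL, Finsupp.lsum_single, LinearMap.toSpanSingleton_apply]

theorem piL_bS {Γ : Set (Finset V)} (u : V) (n : ℕ) (t : Finset V) :
    piL K u n (bS K Γ (n + 1) t) =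
      if u ∈ t then sgn K t u • bS K (link Γ ({u} : Finset V)) n (t.erase u) else 0 := by
  by_cases h : t ∈ Γ ∧ t.card = n + 1
  · rw [bS_pos K h.1 h.2, piL_single, one_smul]
  · rw [bS, dif_neg h, map_zero]
    by_cases hu : u ∈ t
    · rw [if_pos hu]
      have : bS K (link Γ ({u} : Finset V)) n (t.erase u) = 0 := by
        rw [bS, dif_neg]
        rintro ⟨hmem, hcard⟩
        rw [mem_link_singleton] at hmem
        have h2 := hmem.2
        rw [Finset.insert_erase hu] at h2
        have h3 := Finset.card_erase_of_mem hu
        have h4 : 1 ≤ t.card := Finset.card_pos.2 ⟨u, hu⟩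
        exact h ⟨h2, by omega⟩
      rw [this, smul_zero]
    · rw [if_neg hu]

/-- The cone over `u`. -/
noncomputable def iu {Γ : Set (Finset V)} (u : V) (n : ℕ) :
    Chains K (link Γ ({u} : Finset V)) n →ₗ[K] Chains K Γ (n + 1) :=
  Finsupp.lsum K fun t => LinearMap.toSpanSingleton K _
    (sgn K t.1 u • bS K Γ (n + 1) (insert u t.1))

theorem iu_single {Γ : Set (Finset V)} (u : V) (n : ℕ)
    (t : {s : Finset V // s ∈ link Γ ({u} : Finset V) ∧ s.card = n}) (k : K) :
    iu K u n (Finsupp.single t k) = k • sgn K t.1 u • bS K Γ (n + 1) (insert u t.1) := by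
  rw [iu, Finsupp.lsum_single, LinearMap.toSpanSingleton_apply]

theorem iu_bS {Γ : Set (Finset V)} (u : V) (n : ℕ) {t : Finset V} (hu : u ∉ t) :
    iu K u n (bS K (link Γ ({u} : Finset V)) n t) = sgn K t u • bS K Γ (n + 1) (insert u t) := by
  by_cases h : t ∈ link Γ ({u} : Finset V) ∧ t.card = n
  · rw [bS_pos K h.1 h.2, iu_single, one_smul]
  · rw [bS, dif_neg h, map_zero]
    have : bS K Γ (n + 1) (insert u t) = 0 := by
      rw [bS, dif_neg]
      rintro ⟨hmem, hcard⟩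
      rw [Finset.card_insert_of_notMem hu] at hcard
      exact h ⟨mem_link_singleton.2 ⟨hu, hmem⟩, by omega⟩
    rw [this, smul_zero]

end Maps

end SRPure

namespace SRPure

section CM

set_option linter.unusedSectionVars false

variable {V : Type*} [LinearOrder V] (K : Type*) [Field K]

theorem sgn_insert_erase {t : Finset V} {u v : V} (hu : u ∉ t) (hv : v ∈ t) :
    sgn K t u * sgn K (insert u t) v = -(sgn K t v * sgn K (t.erase v) u) := by
  rw [sgn_insert K v hu, sgn_erase K u hv]
  have huv : u ≠ v := fun h => hu (h ▸ hv)
  rcases lt_or_gt_of_ne huv with h | h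
  · rw [if_pos h, if_neg (not_lt.2 h.le)]; ring
  · rw [if_neg (not_lt.2 h.le), if_pos h]; ring

theorem inclMap_bdry {Γ₁ Γ₂ : Set (Finset V)} (h₁ : IsDown Γ₁) (h₂ : IsDown Γ₂)
    (h : Γ₁ ⊆ Γ₂) (c : ℕ) (z : Chains K Γ₁ (c + 1)) :
    inclMap K h c (bdry K h₁ c z) = bdry K h₂ c (inclMap K h (c + 1) z) := by
  induction z using Finsupp.induction_linear with
  | zero => simp
  | add f g hf hg => simp [hf, hg]
  | single s k =>
    rw [bdry_single, map_smul, map_sum, inclMap_single, bdry_single]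
    congr 1
    refine Finset.sum_congr rfl fun v hv => ?_
    rw [map_smul, inclMap_bS K h c (h₁ _ s.2.1 _ (Finset.erase_subset _ _))
      (by simp [Finset.card_erase_of_mem hv, s.2.2])]

theorem piL_inclMap {Γ₁ Γ₂ : Set (Finset V)} (h : Γ₁ ⊆ Γ₂) (u : V)
    (hu : ∀ s ∈ Γ₁, u ∉ s) (n : ℕ) (z : Chains K Γ₁ (n + 1)) :
    piL K u n (inclMap K h (n + 1) z) = 0 := by
  induction z using Finsupp.induction_linear with
  | zero => simp
  | add f g hf hg => simp [hf, hg]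
  | single s k =>
    rw [inclMap_single, piL_single, if_neg (hu s.1 s.2.1), smul_zero]

theorem piL_iu {Γ : Set (Finset V)} (u : V) (n : ℕ)
    (z : Chains K (link Γ ({u} : Finset V)) n) :
    piL K u n (iu K u n z) = z := by
  induction z using Finsupp.induction_linear with
  | zero => simp
  | add f g hf hg => simp [hf, hg]
  | single t k =>
    have hut : u ∉ t.1 := not_mem_of_mem_link t.2.1
    rw [iu_single, map_smul, map_smul, piL_bS, if_pos (Finset.mem_insert_self u t.1),
      Finset.erase_insert hut, sgn_insert_self K hut, smul_smul, smul_smul, mul_assoc,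
      sgn_mul_self, mul_one, single_eq_smul_bS]

theorem decomp {Γ : Set (Finset V)} (u : V) (n : ℕ) (z : Chains K Γ (n + 1)) :
    inclMap K (del_sub Γ u) (n + 1) (piA K u (n + 1) z) + iu K u n (piL K u n z) = z := by
  induction z using Finsupp.induction_linear with
  | zero => simp
  | add f g hf hg =>
    simp only [map_add]
    rw [add_add_add_comm, hf, hg]
  | single s k =>
    by_cases hu : u ∈ s.1
    · rw [piA_single, bS_not_mem K (fun hc => hc.2 hu), smul_zero, map_zero, zero_add,
        piL_single, if_pos hu, map_smul, map_smul,
        iu_bS K u n (Finset.notMem_erase u s.1), Finset.insert_erase hu,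
        sgn_erase_self K hu, smul_smul, smul_smul, mul_assoc, sgn_mul_self, mul_one,
        single_eq_smul_bS]
    · rw [piL_single, if_neg hu, smul_zero, map_zero, add_zero, piA_single, map_smul,
        inclMap_bS K (del_sub Γ u) (n + 1) ⟨s.2.1, hu⟩ s.2.2, single_eq_smul_bS]

theorem bdry_iu {Γ : Set (Finset V)} (hΓ : IsDown Γ) (u : V) (n : ℕ)
    (z : Chains K (link Γ ({u} : Finset V)) (n + 1)) :
    bdry K hΓ (n + 1) (iu K u (n + 1) z) =
      inclMap K (link_singleton_sub hΓ u) (n + 1) z -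
        iu K u n (bdry K (link_down hΓ ({u} : Finset V)) n z) := by
  induction z using Finsupp.induction_linear with
  | zero => simp
  | add f g hf hg => simp only [map_add, hf, hg]; abel
  | single t k =>
    have hut : u ∉ t.1 := not_mem_of_mem_link t.2.1
    have hins : insert u t.1 ∈ Γ := (mem_link_singleton.1 t.2.1).2
    have hinsc : (insert u t.1).card = (n + 1) + 1 := by
      rw [Finset.card_insert_of_notMem hut, t.2.2]
    have hsum1 : ∀ v ∈ t.1, sgn K (insert u t.1) v • bS K Γ (n + 1) ((insert u t.1).erase v) =
        sgn K (insert u t.1) v • bS K Γ (n + 1) (insert u (t.1.erase v)) := fun v hv => by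
      rw [Finset.erase_insert_of_ne (ne_of_mem_of_not_mem hv hut).symm]
    have hsum2 : ∀ v ∈ t.1, iu K u n (sgn K t.1 v •
          bS K (link Γ ({u} : Finset V)) n (t.1.erase v)) =
        (sgn K t.1 v * sgn K (t.1.erase v) u) • bS K Γ (n + 1) (insert u (t.1.erase v)) :=
      fun v hv => by
        rw [map_smul, iu_bS K u n (fun hc => hut (Finset.mem_of_mem_erase hc)), smul_smul]
    rw [iu_single, map_smul, map_smul, bdry_bS K hΓ hins hinsc, Finset.sum_insert hut,
      Finset.erase_insert hut, sgn_insert_self K hut, Finset.sum_congr rfl hsum1,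
      bdry_single, map_smul, map_sum, Finset.sum_congr rfl hsum2,
      inclMap_single, single_eq_smul_bS]
    rw [smul_add, smul_smul, sgn_mul_self, one_smul]
    rw [smul_add, sub_eq_add_neg, ← smul_neg]
    congr 1
    rw [Finset.smul_sum, ← Finset.sum_neg_distrib]
    congr 1
    refine Finset.sum_congr rfl fun v hv => ?_
    rw [smul_smul, sgn_insert_erase K hut hv, neg_smul]

theorem bdry_iu_zero {Γ : Set (Finset V)} (hΓ : IsDown Γ) (u : V)
    (z : Chains K (link Γ ({u} : Finset V)) 0) :
    bdry K hΓ 0 (iu K u 0 z) = inclMap K (link_singleton_sub hΓ u) 0 z := by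
  induction z using Finsupp.induction_linear with
  | zero => simp
  | add f g hf hg => simp [hf, hg]
  | single t k =>
    obtain ⟨t1, ht⟩ := t
    have he : t1 = ∅ := Finset.card_eq_zero.1 ht.2
    subst he
    have hins : insert u (∅ : Finset V) ∈ Γ := (mem_link_singleton.1 ht.1).2
    rw [iu_single, map_smul, map_smul, bdry_bS K hΓ hins (by simp), inclMap_single,
      single_eq_smul_bS]
    simp only [show (insert u (∅ : Finset V)) = {u} from rfl, Finset.sum_singleton,
      Finset.erase_singleton]
    rw [show sgn K (∅ : Finset V) u = 1 by simp [sgn], show sgn K ({u} : Finset V) u = 1 by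
      simp [sgn, Finset.filter_singleton], one_smul, one_smul]

theorem piL_bdry {Γ : Set (Finset V)} (hΓ : IsDown Γ) (u : V) (n : ℕ)
    (z : Chains K Γ (n + 2)) :
    piL K u n (bdry K hΓ (n + 1) z) =
      - bdry K (link_down hΓ ({u} : Finset V)) n (piL K u (n + 1) z) := by
  induction z using Finsupp.induction_linear with
  | zero => simp
  | add f g hf hg => simp only [map_add, hf, hg]; abel
  | single s k =>
    by_cases hu : u ∈ s.1
    · have hL : s.1.erase u ∈ link Γ ({u} : Finset V) := by
        refine mem_link_singleton.2 ⟨Finset.notMem_erase _ _, ?_⟩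
        rw [Finset.insert_erase hu]
        exact s.2.1
      have hLc : (s.1.erase u).card = n + 1 := by
        rw [Finset.card_erase_of_mem hu, s.2.2]
        omega
      have hsum : ∀ v ∈ s.1.erase u, piL K u n (sgn K s.1 v • bS K Γ (n + 1) (s.1.erase v)) =
          (sgn K s.1 v * sgn K (s.1.erase v) u) •
            bS K (link Γ ({u} : Finset V)) n ((s.1.erase u).erase v) := fun v hv => by
        have hvu : v ≠ u := (Finset.mem_erase.1 hv).1
        rw [map_smul, piL_bS, if_pos (Finset.mem_erase.2 ⟨fun h => hvu h.symm,  hu⟩),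
          smul_smul, Finset.erase_right_comm]
      rw [bdry_single, map_smul, map_sum, ← Finset.sum_erase_add _ _ hu,
        Finset.sum_congr rfl hsum, map_smul, piL_bS, if_neg (Finset.notMem_erase u s.1),
        smul_zero, add_zero, piL_single, if_pos hu, map_smul, map_smul,
        bdry_bS K (link_down hΓ ({u} : Finset V)) hL hLc, ← smul_neg]
      congr 1
      rw [Finset.smul_sum, ← Finset.sum_neg_distrib]
      refine Finset.sum_congr rfl fun v hv => ?_
      have hv1 : v ∈ s.1 := Finset.mem_of_mem_erase hv
      have hvu : u ≠ v := fun h => (Finset.mem_erase.1 hv).1 h.symm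
      rw [smul_smul, sgn_swap K hu hv1 hvu, neg_smul]
    · have hsum : ∀ v ∈ s.1, piL K u n (sgn K s.1 v • bS K Γ (n + 1) (s.1.erase v)) = 0 :=
        fun v hv => by
          rw [map_smul, piL_bS, if_neg (fun hc => hu (Finset.mem_of_mem_erase hc)), smul_zero]
      rw [bdry_single, map_smul, map_sum, Finset.sum_congr rfl hsum, piL_single, if_neg hu]
      simp

end CM

end SRPure

namespace SRPure

section Exact

set_option linter.unusedSectionVars false

variable {V : Type*} [LinearOrder V] (K : Type*) [Field K]

/-- Triviality of the reduced homology `RH K hΔ c`. -/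
def homTriv {Δ : Set (Finset V)} (hΔ : IsDown Δ) (c : ℕ) : Prop :=
  ∀ z ∈ cycles K hΔ c, z ∈ LinearMap.range (bdry K hΔ c)

theorem homTriv_iff {Δ : Set (Finset V)} (hΔ : IsDown Δ) (c : ℕ) :
    homTriv K hΔ c ↔ Subsingleton (RH K hΔ c) := by
  constructor
  · intro h
    refine Submodule.Quotient.subsingleton_iff.2 ?_
    rw [Submodule.eq_top_iff']
    intro x
    rw [Submodule.mem_comap, Submodule.subtype_apply]
    exact h x.1 x.2
  · intro h z hz
    have ht := Submodule.Quotient.subsingleton_iff.1 h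
    have := (Submodule.eq_top_iff'.1 ht) ⟨z, hz⟩
    rwa [Submodule.mem_comap, Submodule.subtype_apply] at this

theorem not_homTriv_iff {Δ : Set (Finset V)} (hΔ : IsDown Δ) (c : ℕ) :
    ¬ homTriv K hΔ c ↔ Nontrivial (RH K hΔ c) := by
  rw [homTriv_iff, not_subsingleton_iff_nontrivial]

theorem homTriv_congr {Δ₁ Δ₂ : Set (Finset V)} (e : Δ₁ = Δ₂) (h₁ : IsDown Δ₁)
    (h₂ : IsDown Δ₂) (c : ℕ) (h : homTriv K h₁ c) : homTriv K h₂ c := by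
  subst e; exact h

theorem homTriv_of_no_faces {Δ : Set (Finset V)} (hΔ : IsDown Δ) (c : ℕ)
    (h : ∀ s ∈ Δ, s.card ≠ c + 1) : homTriv K hΔ (c + 1) := by
  intro z _
  have hz : z = 0 := Finsupp.ext fun a => absurd a.2.2 (h a.1 a.2.1)
  rw [hz]
  exact Submodule.zero_mem _

theorem mem_cycles_succ {Δ : Set (Finset V)} (hΔ : IsDown Δ) (c : ℕ)
    (z : Chains K Δ (c + 1)) : z ∈ cycles K hΔ (c + 1) ↔ bdry K hΔ c z = 0 :=
  LinearMap.mem_ker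

theorem mem_cycles_zero {Δ : Set (Finset V)} (hΔ : IsDown Δ) (z : Chains K Δ 0) :
    z ∈ cycles K hΔ 0 := Submodule.mem_top

/-- `bdry ∘ iu` on cycles of the link. -/
theorem bdry_iu_cycle {Γ : Set (Finset V)} (hΓ : IsDown Γ) (u : V) (c : ℕ)
    (b : Chains K (link Γ ({u} : Finset V)) c)
    (hb : b ∈ cycles K (link_down hΓ ({u} : Finset V)) c) :
    bdry K hΓ c (iu K u c b) = inclMap K (link_singleton_sub hΓ u) c b := by
  cases c with
  | zero => exact bdry_iu_zero K hΓ u b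
  | succ m =>
    rw [bdry_iu, (mem_cycles_succ K _ m b).1 hb, map_zero, sub_zero]

/-- First exactness statement: gluing trivial homology. -/
theorem exact1 {Γ : Set (Finset V)} (hΓ : IsDown Γ) (u : V) (c : ℕ)
    (hL : homTriv K (link_down hΓ ({u} : Finset V)) c)
    (hA : homTriv K (del_down hΓ u) (c + 1)) : homTriv K hΓ (c + 1) := by
  intro z hz
  rw [mem_cycles_succ] at hz
  set Lc := link_down hΓ ({u} : Finset V) with hLc
  -- the u-component of z is a cycle
  have hbcyc : piL K u c z ∈ cycles K Lc c := by
    cases c with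
    | zero => exact mem_cycles_zero K Lc _
    | succ m =>
      rw [mem_cycles_succ]
      have := piL_bdry K hΓ u m z
      rw [hz, map_zero] at this
      rw [← neg_eq_zero, ← this]
  obtain ⟨w, hw⟩ := hL _ hbcyc
  set z₂ := z + inclMap K (link_singleton_sub hΓ u) (c + 1) w - iu K u c (piL K u c z) with hz₂
  have hpiz₂ : piL K u c z₂ = 0 := by
    rw [hz₂, map_sub, map_add, piL_iu,
      piL_inclMap K (link_singleton_sub hΓ u) u (fun s hs => not_mem_of_mem_link hs)]
    abel
  have hbz₂ : bdry K hΓ c z₂ = 0 := by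
    rw [hz₂, map_sub, map_add, hz, bdry_iu_cycle K hΓ u c _ hbcyc,
      ← inclMap_bdry K Lc hΓ (link_singleton_sub hΓ u) c w, hw]
    abel
  have hdec := decomp K u c z₂
  rw [hpiz₂, map_zero, add_zero] at hdec
  -- piA z₂ is a cycle of the deletion
  have hacyc : piA K u (c + 1) z₂ ∈ cycles K (del_down hΓ u) (c + 1) := by
    rw [mem_cycles_succ]
    apply inclMap_injective K (del_sub Γ u) c
    rw [inclMap_bdry K (del_down hΓ u) hΓ (del_sub Γ u) c, hdec, hbz₂, map_zero]
  obtain ⟨y, hy⟩ := hA _ hacyc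
  refine ⟨inclMap K (del_sub Γ u) (c + 2) y - iu K u (c + 1) w, ?_⟩
  rw [map_sub, ← inclMap_bdry K (del_down hΓ u) hΓ (del_sub Γ u) (c + 1) y, hy, hdec,
    bdry_iu, hw, hz₂]
  abel

/-- Second exactness statement: trivial homology passes to the deletion. -/
theorem exact2 {Γ : Set (Finset V)} (hΓ : IsDown Γ) (u : V) (c : ℕ)
    (hG : homTriv K hΓ c)
    (hL : homTriv K (link_down hΓ ({u} : Finset V)) c) :
    homTriv K (del_down hΓ u) c := by
  intro z hz
  set Lc := link_down hΓ ({u} : Finset V) with hLcdef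
  have hzc : inclMap K (del_sub Γ u) c z ∈ cycles K hΓ c := by
    cases c with
    | zero => exact mem_cycles_zero K hΓ _
    | succ m =>
      rw [mem_cycles_succ]
      rw [← inclMap_bdry K (del_down hΓ u) hΓ (del_sub Γ u) m z,
        (mem_cycles_succ K (del_down hΓ u) m z).1 hz, map_zero]
  obtain ⟨y, hy⟩ := hG _ hzc
  have hbcyc : piL K u c y ∈ cycles K Lc c := by
    cases c with
    | zero => exact mem_cycles_zero K Lc _
    | succ m =>
      rw [mem_cycles_succ]
      have := piL_bdry K hΓ u m y
      rw [hy, piL_inclMap K (del_sub Γ u) u (fun s hs => hs.2) m z] at this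
      rw [← neg_eq_zero, ← this]
  obtain ⟨w, hw⟩ := hL _ hbcyc
  set y₂ := y + inclMap K (link_singleton_sub hΓ u) (c + 1) w - iu K u c (piL K u c y) with hy₂
  have hpiy₂ : piL K u c y₂ = 0 := by
    rw [hy₂, map_sub, map_add, piL_iu,
      piL_inclMap K (link_singleton_sub hΓ u) u (fun s hs => not_mem_of_mem_link hs)]
    abel
  have hby₂ : bdry K hΓ c y₂ = inclMap K (del_sub Γ u) c z := by
    rw [hy₂, map_sub, map_add, hy, bdry_iu_cycle K hΓ u c _ hbcyc,
      ← inclMap_bdry K Lc hΓ (link_singleton_sub hΓ u) c w, hw]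
    abel
  have hdec := decomp K u c y₂
  rw [hpiy₂, map_zero, add_zero] at hdec
  refine ⟨piA K u (c + 1) y₂, ?_⟩
  apply inclMap_injective K (del_sub Γ u) c
  rw [inclMap_bdry K (del_down hΓ u) hΓ (del_sub Γ u) c, hdec, hby₂]

end Exact

end SRPure

namespace SRPure

section Comb

set_option linter.unusedSectionVars false

variable {V : Type*} [LinearOrder V] (K : Type*) [Field K]

theorem mem_ires {Δ : Set (Finset V)} {W : Finset V} {s : Finset V} :
    s ∈ ires Δ W ↔ s ∈ Δ ∧ s ⊆ W := Iff.rfl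

theorem mem_del {Δ : Set (Finset V)} {u : V} {s : Finset V} :
    s ∈ del Δ u ↔ s ∈ Δ ∧ u ∉ s := Iff.rfl

theorem ires_univ [Fintype V] (Δ : Set (Finset V)) : ires Δ Finset.univ = Δ := by
  ext s; simp [mem_ires, Finset.subset_univ]

theorem del_ires (Δ : Set (Finset V)) (W : Finset V) (u : V) :
    del (ires Δ W) u = ires Δ (W.erase u) := by
  ext s
  rw [mem_del, mem_ires, mem_ires, Finset.subset_erase]
  tauto

theorem link_ires_singleton {Δ : Set (Finset V)} (σ : Finset V) {W : Finset V} {u : V}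
    (huW : u ∈ W) (huσ : u ∉ σ) :
    link (ires (link Δ σ) W) ({u} : Finset V) = ires (link Δ (insert u σ)) (W.erase u) := by
  ext τ
  rw [mem_link_singleton, mem_ires, mem_ires]
  show _ ∧ (insert u τ ∈ link Δ σ ∧ _) ↔ (τ ∈ link Δ (insert u σ)) ∧ _
  simp only [link, Set.mem_setOf_eq]
  constructor
  · rintro ⟨hu, ⟨hd, hm⟩, hsub⟩
    rw [Finset.disjoint_insert_left] at hd
    refine ⟨⟨Finset.disjoint_insert_right.2 ⟨hu, hd.2⟩, ?_⟩, ?_⟩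
    · rwa [Finset.union_insert, ← Finset.insert_union]
    · rw [Finset.subset_erase]
      exact ⟨(Finset.subset_insert u τ).trans hsub, hu⟩
  · rintro ⟨⟨hd, hm⟩, hsub⟩
    rw [Finset.disjoint_insert_right] at hd
    rw [Finset.subset_erase] at hsub
    refine ⟨hd.1, ⟨Finset.disjoint_insert_left.2 ⟨huσ, hd.2⟩, ?_⟩, ?_⟩
    · rwa [Finset.insert_union, ← Finset.union_insert]
    · exact Finset.insert_subset huW hsub.1

variable [Fintype V]

/-- The vertex set of a complex. -/
noncomputable def verts (Δ : Set (Finset V)) : Finset V :=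
  (Set.toFinite {v : V | ({v} : Finset V) ∈ Δ}).toFinset

theorem mem_verts {Δ : Set (Finset V)} {v : V} :
    v ∈ verts Δ ↔ ({v} : Finset V) ∈ Δ := Set.Finite.mem_toFinset _

theorem face_subset_verts {Δ : Set (Finset V)} (hΔ : IsDown Δ) {s : Finset V} (hs : s ∈ Δ) :
    s ⊆ verts Δ := fun v hv =>
  mem_verts.2 (hΔ _ hs _ (Finset.singleton_subset_iff.2 hv))

theorem ires_eq_self {Δ : Set (Finset V)} (hΔ : IsDown Δ) {W : Finset V}
    (h : verts Δ ⊆ W) : ires Δ W = Δ := by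
  ext s
  rw [mem_ires]
  exact ⟨fun hs => hs.1, fun hs => ⟨hs, (face_subset_verts hΔ hs).trans h⟩⟩

theorem singleton_mem_link {Δ : Set (Finset V)} {σ : Finset V} {u : V}
    (h : ({u} : Finset V) ∈ link Δ σ) : u ∉ σ ∧ insert u σ ∈ Δ := by
  obtain ⟨hd, hm⟩ := h
  rw [Finset.disjoint_singleton_left] at hd
  rw [← Finset.insert_eq] at hm
  exact ⟨hd, hm⟩

theorem verts_link_insert {Δ : Set (Finset V)} (hΔ : IsDown Δ) (σ : Finset V) (u : V) :
    verts (link Δ (insert u σ)) ⊆ (verts (link Δ σ)).erase u := by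
  intro v hv
  rw [mem_verts] at hv
  obtain ⟨hd, hm⟩ := hv
  rw [Finset.disjoint_insert_right] at hd
  rw [Finset.mem_erase]
  refine ⟨fun h => hd.1 (Finset.mem_singleton.2 h.symm), ?_⟩
  rw [mem_verts]
  refine ⟨hd.2, hΔ _ hm _ ?_⟩
  rw [Finset.union_insert]
  exact Finset.subset_insert _ _

/-- Lemma A: nontrivial homology of an induced subcomplex of a link propagates to an
honest link of a (weakly larger) face, in the same degree. -/
theorem lemA {Δ : Set (Finset V)} (hΔ : IsDown Δ) (c : ℕ) :
    ∀ n (σ W : Finset V), σ ∈ Δ →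
      ((verts (link Δ σ)) \ W).card ≤ n →
      ¬ homTriv K (ires_down (link_down hΔ σ) W) c →
      ∃ τ ∈ Δ, σ.card ≤ τ.card ∧ ¬ homTriv K (link_down hΔ τ) c := by
  intro n
  induction n with
  | zero =>
    intro σ W hσ hcard hnt
    refine ⟨σ, hσ, le_refl _, fun ht => hnt ?_⟩
    have hsub : verts (link Δ σ) ⊆ W := by
      rw [← Finset.sdiff_eq_empty_iff_subset]
      exact Finset.card_eq_zero.1 (Nat.le_zero.1 hcard)
    exact homTriv_congr K (ires_eq_self (link_down hΔ σ) hsub).symm _ _ c ht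
  | succ n ih =>
    intro σ W hσ hcard hnt
    by_cases hSW : verts (link Δ σ) ⊆ W
    · refine ⟨σ, hσ, le_refl _, fun ht => hnt ?_⟩
      exact homTriv_congr K (ires_eq_self (link_down hΔ σ) hSW).symm _ _ c ht
    · obtain ⟨u, hu⟩ : (verts (link Δ σ) \ W).Nonempty := by
        rw [Finset.sdiff_nonempty]; exact hSW
      rw [Finset.mem_sdiff] at hu
      obtain ⟨huS, huW⟩ := hu
      rw [mem_verts] at huS
      have hulink : ({u} : Finset V) ∈ link Δ σ := huS
      obtain ⟨huσ, hins⟩ := singleton_mem_link hulink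
      by_cases hG : homTriv K (ires_down (link_down hΔ σ) (insert u W)) c
      · -- pass to the link of `insert u σ`
        have hAeq : del (ires (link Δ σ) (insert u W)) u = ires (link Δ σ) W := by
          rw [del_ires, Finset.erase_insert huW]
        have hNA : ¬ homTriv K (del_down (ires_down (link_down hΔ σ) (insert u W)) u) c :=
          fun ht => hnt (homTriv_congr K hAeq _ _ c ht)
        have hNL : ¬ homTriv K
            (link_down (ires_down (link_down hΔ σ) (insert u W)) ({u} : Finset V)) c :=
          fun ht => hNA (exact2 K _ u c hG ht)
        have hLeq : link (ires (link Δ σ) (insert u W)) ({u} : Finset V) =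
            ires (link Δ (insert u σ)) W := by
          rw [link_ires_singleton σ (Finset.mem_insert_self u W) huσ,
            Finset.erase_insert huW]
        have hNL' : ¬ homTriv K (ires_down (link_down hΔ (insert u σ)) W) c :=
          fun ht => hNL (homTriv_congr K hLeq.symm _ _ c ht)
        have hbound : ((verts (link Δ (insert u σ))) \ W).card ≤ n := by
          calc ((verts (link Δ (insert u σ))) \ W).card
              ≤ (((verts (link Δ σ)).erase u) \ W).card :=
                Finset.card_le_card (Finset.sdiff_subset_sdiff (verts_link_insert hΔ σ u)
                  (le_refl _))
            _ ≤ ((verts (link Δ σ) \ W).erase u).card :=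
                Finset.card_le_card (by rw [Finset.erase_sdiff_comm])
            _ ≤ n := by
                rw [Finset.card_erase_of_mem
                  (Finset.mem_sdiff.2 ⟨mem_verts.2 hulink, huW⟩)]
                omega
        obtain ⟨τ, hτ, hcard', hτnt⟩ := ih (insert u σ) W hins hbound hNL'
        exact ⟨τ, hτ, le_trans (Finset.card_le_card (Finset.subset_insert u σ)) hcard', hτnt⟩
      · -- recurse with a larger window
        refine ih σ (insert u W) hσ ?_ hG
        have : verts (link Δ σ) \ insert u W = (verts (link Δ σ) \ W).erase u := by
          rw [Finset.sdiff_insert]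
        rw [this, Finset.card_erase_of_mem (Finset.mem_sdiff.2 ⟨mem_verts.2 hulink, huW⟩)]
        omega

end Comb

end SRPure

namespace SRPure

section Final

set_option linter.unusedSectionVars false

variable {V : Type*} [LinearOrder V] (K : Type*) [Field K] [Fintype V]

/-- Lemma D: nontrivial homology in degree `c+1` of an induced subcomplex of a link
forces nontrivial homology in degree `c` of the link of a strictly larger face. -/
theorem lemD {Δ : Set (Finset V)} (hΔ : IsDown Δ) (c : ℕ) :
    ∀ n (W σ : Finset V), σ ∈ Δ → W.card ≤ n →
      ¬ homTriv K (ires_down (link_down hΔ σ) W) (c + 1) →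
      ∃ τ ∈ Δ, σ.card + 1 ≤ τ.card ∧ ¬ homTriv K (link_down hΔ τ) c := by
  have noVert : ∀ (W σ : Finset V), (¬ ∃ u ∈ W, ({u} : Finset V) ∈ link Δ σ) →
      homTriv K (ires_down (link_down hΔ σ) W) (c + 1) := by
    intro W σ h
    apply homTriv_of_no_faces
    intro s hs hcard
    obtain ⟨v, hv⟩ := Finset.card_pos.1 (by omega : 0 < s.card)
    exact h ⟨v, hs.2 hv,
      link_down hΔ σ _ hs.1 _ (Finset.singleton_subset_iff.2 hv)⟩
  intro n
  induction n with
  | zero =>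
    intro W σ hσ hW hnt
    refine absurd (noVert W σ ?_) hnt
    rintro ⟨u, huW, -⟩
    rw [Finset.card_eq_zero.1 (Nat.le_zero.1 hW)] at huW
    exact absurd huW (Finset.notMem_empty u)
  | succ n ih =>
    intro W σ hσ hW hnt
    by_cases hex : ∃ u ∈ W, ({u} : Finset V) ∈ link Δ σ
    · obtain ⟨u, huW, hul⟩ := hex
      obtain ⟨huσ, hins⟩ := singleton_mem_link hul
      by_cases hL : homTriv K (link_down (ires_down (link_down hΔ σ) W) ({u} : Finset V)) c
      · have hNA : ¬ homTriv K (del_down (ires_down (link_down hΔ σ) W) u) (c + 1) :=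
          fun hA => hnt (exact1 K _ u c hL hA)
        have hNA' : ¬ homTriv K (ires_down (link_down hΔ σ) (W.erase u)) (c + 1) :=
          fun ht => hNA (homTriv_congr K (del_ires (link Δ σ) W u).symm _ _ _ ht)
        refine ih (W.erase u) σ hσ ?_ hNA'
        rw [Finset.card_erase_of_mem huW]
        omega
      · have hNL' : ¬ homTriv K (ires_down (link_down hΔ (insert u σ)) (W.erase u)) c :=
          fun ht => hL (homTriv_congr K (link_ires_singleton σ huW huσ).symm _ _ _ ht)
        obtain ⟨τ, hτ, hcard', hτnt⟩ :=
          lemA K hΔ c ((verts (link Δ (insert u σ))) \ (W.erase u)).card (insert u σ)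
            (W.erase u) hins (le_refl _) hNL'
        refine ⟨τ, hτ, ?_, hτnt⟩
        rw [Finset.card_insert_of_notMem huσ] at hcard'
        omega
    · exact absurd (noVert W σ hex) hnt

/-- Lemma E: iterated degree descent. -/
theorem lemE {Δ : Set (Finset V)} (hΔ : IsDown Δ) (c₁ : ℕ) :
    ∀ d (σ : Finset V), σ ∈ Δ → ¬ homTriv K (link_down hΔ σ) (c₁ + d) →
      ∃ τ ∈ Δ, σ.card + d ≤ τ.card ∧ ¬ homTriv K (link_down hΔ τ) c₁ := by
  intro d
  induction d with
  | zero => intro σ hσ hnt; exact ⟨σ, hσ, by omega, hnt⟩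
  | succ d ih =>
    intro σ hσ hnt
    have hnt' : ¬ homTriv K (ires_down (link_down hΔ σ) Finset.univ) ((c₁ + d) + 1) :=
      fun ht => hnt (homTriv_congr K (ires_univ _) _ _ _ ht)
    obtain ⟨τ', hτ', hc', hnt''⟩ :=
      lemD K hΔ (c₁ + d) Finset.univ.card Finset.univ σ hσ (le_refl _) hnt'
    obtain ⟨τ, hτ, hc, hnt₃⟩ := ih τ' hτ' hnt''
    exact ⟨τ, hτ, by omega, hnt₃⟩

end Final

end SRPure


open SRPure in
/-- In a PR complex over `K`, if `σ₁, σ₂` are faces whose links have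
nontrivial reduced homology in degrees `i₁, i₂` (cardinality indices `c₁ = i₁ + 1`,
`c₂ = i₂ + 1`) and `|σ₁| < |σ₂|`, then `i₁ > i₂`. -/
theorem link_homology_degree_antitone_of_isPR
    {V : Type*} [LinearOrder V] [Fintype V] (K : Type*) [Field K]
    (Δ : Set (Finset V)) (hΔ : IsDown Δ) (hPR : IsPR K hΔ)
    (σ₁ : Finset V) (hσ₁ : σ₁ ∈ Δ) (σ₂ : Finset V) (hσ₂ : σ₂ ∈ Δ) (c₁ c₂ : ℕ)
    (h₁ : Nontrivial (RH K (link_down hΔ σ₁) c₁))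
    (h₂ : Nontrivial (RH K (link_down hΔ σ₂) c₂))
    (hcard : σ₁.card < σ₂.card) : c₂ < c₁ := by
  by_contra hlt
  push_neg at hlt
  have h2' : ¬ homTriv K (link_down hΔ σ₂) c₂ := (not_homTriv_iff K _ _).2 h₂
  obtain ⟨d, hd⟩ : ∃ d, c₂ = c₁ + d := ⟨c₂ - c₁, by omega⟩
  subst hd
  obtain ⟨τ, hτ, hc, hτnt⟩ := lemE K hΔ c₁ d σ₂ hσ₂ h2'
  have := hPR σ₁ hσ₁ τ hτ c₁ h₁ ((not_homTriv_iff K _ _).1 hτnt)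
  omega
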